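/- Let μ be the Gauss measure, μ(A) = (1/log 2)∫_A dx/(1+x) on [0,1). For every positive integer λ, with τ = (λ+√(λ²+4))/2, there exist constants c₋, c₊ > 0 such that for all k ≥ 1, c₋ τ^{−2k} ≤ μ(Δ_k(λ)) ≤ c₊ τ^{−2k}. In fact one may take c₋ = τ/(2 log 2 · (τ+1)) and c₊ = (λ²+4)τ/((τ+1)λ² log 2). -/

import Mathlib

open Real
/-- One step of the Gauss map iteration: `gaussIter n x = G^n(x)` where `G y = {1/y}`. -/
noncomputable def gaussIter (n : ℕ) (x : ℝ) : ℝ := (fun y => Int.fract y⁻¹)^[n] x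

/-- `pq n x` is the `(n+1)`-st continued fraction partial quotient `a_{n+1}(x)`. -/
noncomputable def pq (n : ℕ) (x : ℝ) : ℕ := ⌊(gaussIter n x)⁻¹⌋₊

/-- The rank-`k` cylinder `Δ(d_1, …, d_k)`, where `d i` stands for `d_{i+1}`. -/
noncomputable def cfCyl (k : ℕ) (d : ℕ → ℕ) : Set ℝ :=
  {x | x ∈ Set.Ioo (0 : ℝ) 1 ∧ Irrational x ∧ ∀ i < k, pq i x = d i}

/-- The constant-word cylinder `Δ_k(λ)`. -/
noncomputable def cfCylC (k : ℕ) (l : ℕ) : Set ℝ := cfCyl k (fun _ => l)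

open MeasureTheory

/-- The Gauss measure `μ(A) = (1/log 2) ∫_A dx/(1+x)` on `[0,1)`. -/
noncomputable def gaussMeasure : Measure ℝ :=
  (volume.restrict (Set.Ico (0 : ℝ) 1)).withDensity
    (fun x => ENNReal.ofReal (((1 + x) * Real.log 2)⁻¹))

/-- τ(λ) = (λ + √(λ²+4))/2. -/
noncomputable def tauCF (l : ℕ) : ℝ := (l + Real.sqrt (l ^ 2 + 4)) / 2

/- ===================== auxiliary development ===================== -/

lemma two_step {P : ℕ → Prop} (h0 : P 0) (h1 : P 1)
    (hs : ∀ n, P n → P (n+1) → P (n+2)) : ∀ n, P n := by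
  intro n
  induction n using Nat.strong_induction_on with
  | _ n ih =>
    match n with
    | 0 => exact h0
    | 1 => exact h1
    | (m+2) => exact hs m (ih m (by omega)) (ih (m+1) (by omega))

lemma tau_facts (l : ℕ) (hl : 1 ≤ l) :
    (l:ℝ) ≤ tauCF l ∧ 1 < tauCF l ∧ tauCF l ^ 2 = l * tauCF l + 1 ∧
      tauCF l ^ 2 ≤ (l:ℝ)^2 + 4 ∧ tauCF l ≤ (l:ℝ) + 1/(l:ℝ) := by
  have hl1 : (1:ℝ) ≤ l := by exact_mod_cast hl
  have hD0 : (0:ℝ) ≤ (l:ℝ)^2 + 4 := by positivity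
  have hs2 : Real.sqrt ((l:ℝ)^2 + 4) ^ 2 = (l:ℝ)^2 + 4 := Real.sq_sqrt hD0
  have hs0 : 0 ≤ Real.sqrt ((l:ℝ)^2 + 4) := Real.sqrt_nonneg _
  have hsl : (l:ℝ) ≤ Real.sqrt ((l:ℝ)^2 + 4) := by
    nlinarith [hs2, hs0]
  have hs2' : Real.sqrt ((l:ℝ)^2+4) ≥ 2 := by nlinarith [hs2, hs0]
  have hsub : Real.sqrt ((l:ℝ)^2+4) ≤ (l:ℝ) + 2 * (1/(l:ℝ)) := by
    have hlp : (0:ℝ) < l := by linarith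
    have hle : (l:ℝ)^2 + 4 ≤ ((l:ℝ) + 2 * (1/(l:ℝ)))^2 := by
      have : ((l:ℝ) + 2 * (1/(l:ℝ)))^2 = (l:ℝ)^2 + 4 + 4 * (1/(l:ℝ))^2 := by
        field_simp; ring
      nlinarith [sq_nonneg (1/(l:ℝ))]
    calc Real.sqrt ((l:ℝ)^2+4) ≤ Real.sqrt (((l:ℝ) + 2 * (1/(l:ℝ)))^2) :=
          Real.sqrt_le_sqrt hle
      _ = (l:ℝ) + 2 * (1/(l:ℝ)) := Real.sqrt_sq (by positivity)
  unfold tauCF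
  refine ⟨by linarith, by linarith, by nlinarith [hs2], by nlinarith [hs2, hsl], by linarith⟩

noncomputable def cfQ (l : ℕ) : ℕ → ℝ
  | 0 => 1
  | 1 => (l:ℝ)
  | (n+2) => l * cfQ l (n+1) + cfQ l n

noncomputable def cfR (l : ℕ) : ℕ → ℝ
  | 0 => 1
  | 1 => (l:ℝ) + 1
  | (n+2) => l * cfR l (n+1) + cfR l n

noncomputable def cfP (l : ℕ) : ℕ → ℝ
  | 0 => 0
  | 1 => 1
  | (n+2) => l * cfP l (n+1) + cfP l n

noncomputable def cfS (l : ℕ) : ℕ → ℝ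
  | 0 => 1
  | 1 => 1
  | (n+2) => l * cfS l (n+1) + cfS l n

noncomputable def cfUV (l : ℕ) : ℕ → ℝ × ℝ
  | 0 => (0, 1)
  | (n+1) => (((l:ℝ) + (cfUV l n).2)⁻¹, ((l:ℝ) + (cfUV l n).1)⁻¹)

lemma cfQ_pos (l : ℕ) (hl : 1 ≤ l) : ∀ n, 0 < cfQ l n := by
  have hl1 : (1:ℝ) ≤ l := by exact_mod_cast hl
  refine two_step (by simp [cfQ]) (by simp [cfQ]; linarith) (fun n h1 h2 => ?_)
  show 0 < l * cfQ l (n+1) + cfQ l n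
  nlinarith

lemma cfR_pos (l : ℕ) (hl : 1 ≤ l) : ∀ n, 0 < cfR l n := by
  have hl1 : (1:ℝ) ≤ l := by exact_mod_cast hl
  refine two_step (by simp [cfR]) (by simp [cfR]; linarith) (fun n h1 h2 => ?_)
  show 0 < l * cfR l (n+1) + cfR l n
  nlinarith

lemma cfPQ (l : ℕ) : ∀ n, cfP l (n+1) = cfQ l n := by
  refine two_step (by simp [cfP, cfQ]) (by simp [cfP, cfQ]) (fun n h1 h2 => ?_)
  show l * cfP l (n+2) + cfP l (n+1) = l * cfQ l (n+1) + cfQ l n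
  rw [h1, h2]

lemma cfSR (l : ℕ) : ∀ n, cfS l (n+1) = cfR l n := by
  refine two_step (by simp [cfS, cfR]) (by simp [cfS, cfR]) (fun n h1 h2 => ?_)
  show l * cfS l (n+2) + cfS l (n+1) = l * cfR l (n+1) + cfR l n
  rw [h1, h2]

lemma cfQ_rec (l : ℕ) : ∀ n, cfQ l (n+1) = l * cfQ l n + cfP l n := by
  intro n
  match n with
  | 0 => simp [cfQ, cfP]
  | (m+1) => show cfQ l (m+2) = _ ; rw [cfPQ l m]; rfl

lemma cfR_rec (l : ℕ) : ∀ n, cfR l (n+1) = l * cfR l n + cfS l n := by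
  intro n
  match n with
  | 0 => simp [cfR, cfS]
  | (m+1) => show cfR l (m+2) = _ ; rw [cfSR l m]; rfl

lemma cfDet (l : ℕ) : ∀ n, cfP l n * cfR l n - cfQ l n * cfS l n = (-1:ℝ)^(n+1) := by
  intro n
  induction n with
  | zero => simp [cfP, cfQ, cfR, cfS]
  | succ m ih =>
    rw [cfPQ l m, cfSR l m, cfQ_rec l m, cfR_rec l m]
    have : cfQ l m * (l * cfR l m + cfS l m) - (l * cfQ l m + cfP l m) * cfR l m
        = -(cfP l m * cfR l m - cfQ l m * cfS l m) := by ring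
    rw [this, ih]
    ring

lemma cfQ_bounds (l : ℕ) (hl : 1 ≤ l) :
    ∀ n, (l:ℝ) * tauCF l ^ n ≤ tauCF l * cfQ l n ∧ cfQ l n ≤ tauCF l ^ n := by
  obtain ⟨hlτ, hτ1, hsq, -, -⟩ := tau_facts l hl
  have hl0 : (0:ℝ) ≤ l := Nat.cast_nonneg l
  set τ := tauCF l with hτ
  refine two_step ?_ ?_ ?_
  · constructor
    · simpa [cfQ] using hlτ
    · simp [cfQ]
  · constructor
    · simp [cfQ]; ring_nf; exact le_rfl
    · simpa [cfQ] using hlτ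
  · rintro n ⟨h1l, h1u⟩ ⟨h2l, h2u⟩
    have hQrec : cfQ l (n+2) = l * cfQ l (n+1) + cfQ l n := rfl
    constructor
    · have : (l:ℝ) * τ^(n+2) = l * ((l:ℝ) * τ^(n+1)) + (l:ℝ) * τ^n := by
        linear_combination ((l:ℝ) * τ^n) * hsq
      rw [hQrec, this]
      have h1 : (l:ℝ) * ((l:ℝ) * τ^(n+1)) ≤ l * (τ * cfQ l (n+1)) :=
        mul_le_mul_of_nonneg_left h2l hl0
      have h2 : (l:ℝ) * τ^n ≤ τ * cfQ l n := h1l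
      calc (l:ℝ) * ((l:ℝ) * τ^(n+1)) + (l:ℝ) * τ^n
          ≤ l * (τ * cfQ l (n+1)) + τ * cfQ l n := by linarith
        _ = τ * ((l:ℝ) * cfQ l (n+1) + cfQ l n) := by ring
    · rw [hQrec]
      have h1 : (l:ℝ) * cfQ l (n+1) ≤ l * τ^(n+1) :=
        mul_le_mul_of_nonneg_left h2u hl0
      have : (l:ℝ) * τ^(n+1) + τ^n = τ^(n+2) := by
        linear_combination (-(τ:ℝ)^n) * hsq
      linarith

lemma cfR_bounds (l : ℕ) (hl : 1 ≤ l) :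
    ∀ n, tauCF l * cfR l n ≤ (tauCF l + 1) * tauCF l ^ n := by
  obtain ⟨hlτ, hτ1, hsq, -, -⟩ := tau_facts l hl
  have hl0 : (0:ℝ) ≤ l := Nat.cast_nonneg l
  set τ := tauCF l with hτ
  refine two_step ?_ ?_ ?_
  · show τ * (1:ℝ) ≤ (τ + 1) * τ^0; rw [pow_zero]; linarith
  · show τ * ((l:ℝ) + 1) ≤ (τ + 1) * τ^1
    have : (τ + 1) * τ^1 = τ * (τ + 1) := by ring
    rw [this]
    have : (l:ℝ) + 1 ≤ τ + 1 := by linarith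
    exact mul_le_mul_of_nonneg_left this (by linarith)
  · intro n h1 h2
    have hRrec : cfR l (n+2) = l * cfR l (n+1) + cfR l n := rfl
    rw [hRrec]
    have h1' : (l:ℝ) * (τ * cfR l (n+1)) ≤ l * ((τ+1) * τ^(n+1)) :=
      mul_le_mul_of_nonneg_left h2 hl0
    have he : (l:ℝ) * ((τ+1) * τ^(n+1)) + (τ+1) * τ^n = (τ+1) * τ^(n+2) := by
      linear_combination (-(τ+1) * τ^n) * hsq
    calc τ * ((l:ℝ) * cfR l (n+1) + cfR l n)
        = (l:ℝ) * (τ * cfR l (n+1)) + τ * cfR l n := by ring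
      _ ≤ l * ((τ+1) * τ^(n+1)) + (τ+1) * τ^n := by linarith
      _ = (τ+1) * τ^(n+2) := he

lemma cfR_lbounds (l : ℕ) (hl : 1 ≤ l) :
    ∀ n, (l:ℝ) * (tauCF l + 1) * tauCF l ^ n ≤ tauCF l * cfR l (n+1) := by
  obtain ⟨hlτ, hτ1, hsq, -, hτle⟩ := tau_facts l hl
  have hl0 : (0:ℝ) ≤ l := Nat.cast_nonneg l
  have hl1 : (1:ℝ) ≤ l := by exact_mod_cast hl
  set τ := tauCF l with hτ
  have hτ0 : (0:ℝ) < τ := by linarith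
  have hkey : (l:ℝ) * τ ≤ (l:ℝ)^2 + 1 := by
    have hlp : (0:ℝ) < l := by linarith
    have h := mul_le_mul_of_nonneg_left hτle hl0
    have he : (l:ℝ) * ((l:ℝ) + 1/(l:ℝ)) = (l:ℝ)^2 + 1 := by field_simp
    linarith [he ▸ h]
  refine two_step ?_ ?_ ?_
  · show (l:ℝ) * (τ + 1) * τ^0 ≤ τ * cfR l 1
    show (l:ℝ) * (τ + 1) * τ^0 ≤ τ * ((l:ℝ) + 1)
    rw [pow_zero, mul_one]
    nlinarith
  · show (l:ℝ) * (τ + 1) * τ^1 ≤ τ * cfR l 2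
    have hR2 : cfR l 2 = l * ((l:ℝ)+1) + 1 := rfl
    rw [hR2]
    nlinarith [mul_le_mul_of_nonneg_left hkey (le_of_lt hτ0)]
  · intro n h1 h2
    have hRrec : cfR l (n+3) = l * cfR l (n+2) + cfR l (n+1) := rfl
    rw [hRrec]
    have h2' : (l:ℝ) * ((l:ℝ) * (τ+1) * τ^(n+1)) ≤ l * (τ * cfR l (n+2)) :=
      mul_le_mul_of_nonneg_left h2 hl0
    have he : (l:ℝ) * (τ+1) * τ^(n+2) = (l:ℝ) * ((l:ℝ) * (τ+1) * τ^(n+1)) + (l:ℝ) * (τ+1) * τ^n := by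
      linear_combination ((l:ℝ) * (τ+1) * τ^n) * hsq
    calc (l:ℝ) * (τ+1) * τ^(n+2)
        ≤ l * (τ * cfR l (n+2)) + (l:ℝ) * (τ+1) * τ^n := by linarith [he]
      _ ≤ l * (τ * cfR l (n+2)) + τ * cfR l (n+1) := by linarith
      _ = τ * ((l:ℝ) * cfR l (n+2) + cfR l (n+1)) := by ring

lemma cfUV_mem (l : ℕ) (hl : 1 ≤ l) :
    ∀ n, 0 ≤ (cfUV l n).1 ∧ (cfUV l n).1 < (cfUV l n).2 ∧ (cfUV l n).2 ≤ 1 := by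
  have hl1 : (1:ℝ) ≤ l := by exact_mod_cast hl
  intro n
  induction n with
  | zero => simp [cfUV]
  | succ m ih =>
    obtain ⟨h0, huv, h1⟩ := ih
    have hu : (cfUV l (m+1)).1 = ((l:ℝ) + (cfUV l m).2)⁻¹ := rfl
    have hv : (cfUV l (m+1)).2 = ((l:ℝ) + (cfUV l m).1)⁻¹ := rfl
    have hp1 : (0:ℝ) < (l:ℝ) + (cfUV l m).1 := by linarith
    have hp2 : (0:ℝ) < (l:ℝ) + (cfUV l m).2 := by linarith
    refine ⟨?_, ?_, ?_⟩
    · rw [hu]; positivity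
    · rw [hu, hv]
      exact inv_strictAnti₀ hp1 (by linarith)
    · rw [hv]
      rw [inv_le_one_iff₀]
      right; linarith

lemma cfUV_parity (l : ℕ) (hl : 1 ≤ l) :
    ∀ n, ((cfUV l n).1 = cfP l n / cfQ l n ∧ (cfUV l n).2 = cfS l n / cfR l n) ∨
         ((cfUV l n).1 = cfS l n / cfR l n ∧ (cfUV l n).2 = cfP l n / cfQ l n) := by
  have hQ := cfQ_pos l hl
  have hR := cfR_pos l hl
  have hTP : ∀ n, ((l:ℝ) + cfP l n / cfQ l n)⁻¹ = cfP l (n+1) / cfQ l (n+1) := by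
    intro n
    have hQn : cfQ l n ≠ 0 := (hQ n).ne'
    rw [cfPQ l n, cfQ_rec l n]
    rw [show (l:ℝ) + cfP l n / cfQ l n = ((l:ℝ) * cfQ l n + cfP l n) / cfQ l n from by
      field_simp]
    rw [inv_div]
  have hTS : ∀ n, ((l:ℝ) + cfS l n / cfR l n)⁻¹ = cfS l (n+1) / cfR l (n+1) := by
    intro n
    have hRn : cfR l n ≠ 0 := (hR n).ne'
    rw [cfSR l n, cfR_rec l n]
    rw [show (l:ℝ) + cfS l n / cfR l n = ((l:ℝ) * cfR l n + cfS l n) / cfR l n from by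
      field_simp]
    rw [inv_div]
  intro n
  induction n with
  | zero => left; constructor <;> simp [cfUV, cfP, cfQ, cfS, cfR]
  | succ m ih =>
    have hu : (cfUV l (m+1)).1 = ((l:ℝ) + (cfUV l m).2)⁻¹ := rfl
    have hv : (cfUV l (m+1)).2 = ((l:ℝ) + (cfUV l m).1)⁻¹ := rfl
    rcases ih with ⟨h1, h2⟩ | ⟨h1, h2⟩
    · right
      rw [hu, hv, h1, h2, hTP, hTS]
      exact ⟨rfl, rfl⟩
    · left
      rw [hu, hv, h1, h2, hTP, hTS]
      exact ⟨rfl, rfl⟩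

lemma cfUV_diff (l : ℕ) (hl : 1 ≤ l) (n : ℕ) :
    (cfUV l n).2 - (cfUV l n).1 = (cfQ l n * cfR l n)⁻¹ := by
  have hQ := cfQ_pos l hl n
  have hR := cfR_pos l hl n
  have hdet := cfDet l n
  obtain ⟨-, huv, -⟩ := cfUV_mem l hl n
  have hQR : (0:ℝ) < cfQ l n * cfR l n := mul_pos hQ hR
  rcases cfUV_parity l hl n with ⟨h1, h2⟩ | ⟨h1, h2⟩
  · -- v - u = S/R - P/Q = (SQ - PR)/(QR) = -(-1)^(n+1)/(QR)
    have hval : (cfUV l n).2 - (cfUV l n).1 = (-(-1:ℝ)^(n+1)) / (cfQ l n * cfR l n) := by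
      rw [h1, h2, div_sub_div _ _ hR.ne' hQ.ne']
      rw [show cfS l n * cfQ l n - cfR l n * cfP l n = -(-1:ℝ)^(n+1) from by linarith [hdet]]
      rw [mul_comm (cfR l n)]
    have hpos : (0:ℝ) < (-(-1:ℝ)^(n+1)) / (cfQ l n * cfR l n) := hval ▸ (by linarith)
    have hsign : (-(-1:ℝ)^(n+1)) = 1 := by
      rcases neg_one_pow_eq_or ℝ (n+1) with h | h
      · exfalso
        rw [h] at hpos
        have := div_pos_iff.mp hpos
        rcases this with ⟨ha, -⟩ | ⟨-, hb⟩ <;> linarith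
      · rw [h]; norm_num
    rw [hval, hsign, one_div]
  · have hval : (cfUV l n).2 - (cfUV l n).1 = ((-1:ℝ)^(n+1)) / (cfQ l n * cfR l n) := by
      rw [h1, h2]
      field_simp
      linarith [hdet]
    have hpos : (0:ℝ) < ((-1:ℝ)^(n+1)) / (cfQ l n * cfR l n) := hval ▸ (by linarith)
    have hsign : ((-1:ℝ)^(n+1)) = 1 := by
      rcases neg_one_pow_eq_or ℝ (n+1) with h | h
      · exact h
      · exfalso
        rw [h] at hpos
        have := div_pos_iff.mp hpos
        rcases this with ⟨ha, -⟩ | ⟨-, hb⟩ <;> linarith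
    rw [hval, hsign, one_div]

lemma pq_zero (x : ℝ) : pq 0 x = ⌊x⁻¹⌋₊ := by simp [pq, gaussIter]

lemma pq_succ (i : ℕ) (x : ℝ) : pq (i+1) x = pq i (Int.fract x⁻¹) := by
  simp only [pq, gaussIter, Function.iterate_succ_apply]

lemma cyl_eq (l : ℕ) (hl : 1 ≤ l) :
    ∀ k, cfCylC k l = {x | x ∈ Set.Ioo (cfUV l k).1 (cfUV l k).2 ∧ Irrational x} := by
  have hl1 : (1:ℝ) ≤ l := by exact_mod_cast hl
  intro k
  induction k with
  | zero =>
    ext x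
    constructor
    · rintro ⟨h1, h2, -⟩; exact ⟨h1, h2⟩
    · rintro ⟨h1, h2⟩; exact ⟨h1, h2, fun i hi => absurd hi (Nat.not_lt_zero i)⟩
  | succ k ih =>
    obtain ⟨hu0, huv, hv1⟩ := cfUV_mem l hl k
    have hul : (cfUV l (k+1)).1 = ((l:ℝ) + (cfUV l k).2)⁻¹ := rfl
    have hvr : (cfUV l (k+1)).2 = ((l:ℝ) + (cfUV l k).1)⁻¹ := rfl
    have hpu : (0:ℝ) < (l:ℝ) + (cfUV l k).1 := by linarith
    have hpv : (0:ℝ) < (l:ℝ) + (cfUV l k).2 := by linarith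
    ext x
    simp only [cfCylC, cfCyl, Set.mem_setOf_eq]
    constructor
    · rintro ⟨⟨hx0, hx1⟩, hirr, hall⟩
      have hxne : x ≠ 0 := ne_of_gt hx0
      have h0 : ⌊x⁻¹⌋₊ = l := by rw [← pq_zero]; exact hall 0 (Nat.succ_pos k)
      have hinv0 : 0 < x⁻¹ := inv_pos.mpr hx0
      have hfl := Nat.floor_eq_iff (le_of_lt hinv0) |>.mp h0
      have hirr' : Irrational x⁻¹ := hirr.inv
      have hlt : (l:ℝ) < x⁻¹ := lt_of_le_of_ne hfl.1 (Ne.symm (hirr'.ne_nat l))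
      have hlt2 : x⁻¹ < (l:ℝ) + 1 := by
        have := hfl.2; push_cast at this ⊢; linarith
      have hfr : Int.fract x⁻¹ = x⁻¹ - l := by
        have hfloor : ⌊x⁻¹⌋ = (l:ℤ) := by
          rw [Int.floor_eq_iff]
          constructor <;> push_cast <;> linarith
        rw [Int.fract, hfloor]; push_cast; ring
      set y := x⁻¹ - (l:ℝ) with hydef
      have hy0 : 0 < y := by simp only [hydef]; linarith
      have hy1 : y < 1 := by simp only [hydef]; linarith
      have hyirr : Irrational y := hirr'.sub_natCast l
      have hstep : ∀ i, pq (i+1) x = pq i y := by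
        intro i; rw [pq_succ, hfr]
      have hycyl : y ∈ cfCylC k l := by
        refine ⟨⟨hy0, hy1⟩, hyirr, fun i hi => ?_⟩
        rw [← hstep i]; exact hall (i+1) (by omega)
      rw [ih] at hycyl
      have hymem : y ∈ Set.Ioo (cfUV l k).1 (cfUV l k).2 := hycyl.1
      have hxy : x = ((l:ℝ) + y)⁻¹ := by
        have : (l:ℝ) + y = x⁻¹ := by simp only [hydef]; ring
        rw [this, inv_inv]
      refine ⟨⟨?_, ?_⟩, hirr⟩
      · rw [hul, hxy]
        exact inv_strictAnti₀ (by linarith [hymem.1]) (by linarith [hymem.2])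
      · rw [hvr, hxy]
        exact inv_strictAnti₀ (by linarith [hymem.1]) (by linarith [hymem.1])
    · rintro ⟨⟨hxl, hxr⟩, hirr⟩
      rw [hul] at hxl
      rw [hvr] at hxr
      have hx0 : 0 < x := lt_trans (inv_pos.mpr hpv) hxl
      have hinva : (l:ℝ) + (cfUV l k).1 < x⁻¹ := by
        have h := inv_strictAnti₀ hx0 hxr
        rwa [inv_inv] at h
      have hinvb : x⁻¹ < (l:ℝ) + (cfUV l k).2 := by
        have h := inv_strictAnti₀ (inv_pos.mpr hpv) hxl
        rwa [inv_inv] at h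
      have hx1 : x < 1 := by
        have hinv1 : 1 < x⁻¹ := by linarith
        have := inv_strictAnti₀ one_pos hinv1
        simpa using this
      have hinv0 : 0 < x⁻¹ := inv_pos.mpr hx0
      have h0 : ⌊x⁻¹⌋₊ = l := by
        rw [Nat.floor_eq_iff (le_of_lt hinv0)]
        constructor <;> push_cast <;> linarith
      have hfr : Int.fract x⁻¹ = x⁻¹ - l := by
        have hfloor : ⌊x⁻¹⌋ = (l:ℤ) := by
          rw [Int.floor_eq_iff]
          constructor <;> push_cast <;> linarith
        rw [Int.fract, hfloor]; push_cast; ring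
      set y := x⁻¹ - (l:ℝ) with hydef
      have hymem : y ∈ Set.Ioo (cfUV l k).1 (cfUV l k).2 := by
        constructor <;> simp only [hydef] <;> linarith
      have hyirr : Irrational y := hirr.inv.sub_natCast l
      have hycyl : y ∈ cfCylC k l := by
        rw [ih]; exact ⟨hymem, hyirr⟩
      refine ⟨⟨hx0, hx1⟩, hirr, fun i hi => ?_⟩
      match i with
      | 0 => rw [pq_zero]; exact h0
      | (j+1) =>
        rw [pq_succ, hfr]
        exact hycyl.2.2 j (by omega)

lemma gauss_null_rat : gaussMeasure (Set.range ((↑) : ℚ → ℝ)) = 0 := by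
  have hc : (Set.range ((↑) : ℚ → ℝ)).Countable := Set.countable_range _
  have h1 : (volume.restrict (Set.Ico (0:ℝ) 1)) (Set.range ((↑) : ℚ → ℝ)) = 0 := by
    have h2 : (volume : Measure ℝ) (Set.range ((↑) : ℚ → ℝ)) = 0 := hc.measure_zero _
    have := Measure.restrict_le_self (μ := (volume : Measure ℝ)) (s := Set.Ico (0:ℝ) 1)
      (Set.range ((↑) : ℚ → ℝ))
    exact le_antisymm (h2 ▸ this) zero_le
  exact withDensity_absolutelyContinuous _ _ h1

lemma gauss_Ioo_bounds (a b : ℝ) (h0 : 0 ≤ a) (hab : a ≤ b) (h1 : b ≤ 1) :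
    ENNReal.ofReal ((b - a) / (2 * Real.log 2)) ≤ gaussMeasure (Set.Ioo a b) ∧
      gaussMeasure (Set.Ioo a b) ≤ ENNReal.ofReal ((b - a) / Real.log 2) := by
  have hlog : 0 < Real.log 2 := Real.log_pos (by norm_num)
  have hm : MeasurableSet (Set.Ioo a b) := measurableSet_Ioo
  have hsub : Set.Ioo a b ⊆ Set.Ico (0:ℝ) 1 := fun x hx =>
    ⟨le_of_lt (lt_of_le_of_lt h0 hx.1), lt_of_lt_of_le hx.2 h1⟩
  have happ : gaussMeasure (Set.Ioo a b)
      = ∫⁻ x in Set.Ioo a b, ENNReal.ofReal (((1 + x) * Real.log 2)⁻¹) ∂volume := by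
    rw [gaussMeasure, withDensity_apply _ hm, Measure.restrict_restrict hm,
      Set.inter_eq_left.mpr hsub]
  constructor
  · rw [happ]
    calc ENNReal.ofReal ((b - a) / (2 * Real.log 2))
        = ENNReal.ofReal ((2 * Real.log 2)⁻¹) * volume (Set.Ioo a b) := by
          rw [Real.volume_Ioo, ← ENNReal.ofReal_mul (by positivity)]
          congr 1
          rw [div_eq_mul_inv]; ring
      _ = ∫⁻ _ in Set.Ioo a b, ENNReal.ofReal ((2 * Real.log 2)⁻¹) ∂volume := by
          rw [setLIntegral_const]
      _ ≤ ∫⁻ x in Set.Ioo a b, ENNReal.ofReal (((1 + x) * Real.log 2)⁻¹) ∂volume := by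
          refine setLIntegral_mono' hm fun x hx => ?_
          refine ENNReal.ofReal_le_ofReal ?_
          have hx1 : x < 1 := lt_of_lt_of_le hx.2 h1
          have hpos : 0 < (1 + x) * Real.log 2 := by
            have : 0 < 1 + x := by linarith [lt_of_le_of_lt h0 hx.1]
            positivity
          apply inv_anti₀ hpos
          nlinarith
  · rw [happ]
    calc ∫⁻ x in Set.Ioo a b, ENNReal.ofReal (((1 + x) * Real.log 2)⁻¹) ∂volume
        ≤ ∫⁻ _ in Set.Ioo a b, ENNReal.ofReal ((Real.log 2)⁻¹) ∂volume := by
          refine setLIntegral_mono' hm fun x hx => ?_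
          refine ENNReal.ofReal_le_ofReal ?_
          have hx0 : 0 < x := lt_of_le_of_lt h0 hx.1
          apply inv_anti₀ hlog
          nlinarith
      _ = ENNReal.ofReal ((Real.log 2)⁻¹) * volume (Set.Ioo a b) := setLIntegral_const _ _
      _ = ENNReal.ofReal ((b - a) / Real.log 2) := by
          rw [Real.volume_Ioo, ← ENNReal.ofReal_mul (by positivity)]
          congr 1
          rw [div_eq_mul_inv]; ring

/-- Two-sided exponential bounds for the Gauss measure of `Δ_k(λ)`,
with the explicit constants `c₋ = τ/(2 log 2 (τ+1))`, `c₊ = (λ²+4)τ/((τ+1)λ² log 2)`. -/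
theorem gaussMeasure_cfCylC_bounds (l : ℕ) (hl : 1 ≤ l) :
    ∃ cm cp : ℝ, 0 < cm ∧ 0 < cp ∧
      cm = tauCF l / (2 * Real.log 2 * (tauCF l + 1)) ∧
      cp = ((l : ℝ) ^ 2 + 4) * tauCF l / ((tauCF l + 1) * (l : ℝ) ^ 2 * Real.log 2) ∧
      ∀ k : ℕ, 1 ≤ k →
        ENNReal.ofReal (cm * tauCF l ^ (-(2 * k : ℤ))) ≤ gaussMeasure (cfCylC k l) ∧
        gaussMeasure (cfCylC k l) ≤ ENNReal.ofReal (cp * tauCF l ^ (-(2 * k : ℤ))) := by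
  obtain ⟨hlτ, hτ1, hsq, hsqle, -⟩ := tau_facts l hl
  have hl1 : (1:ℝ) ≤ l := by exact_mod_cast hl
  have hlog : 0 < Real.log 2 := Real.log_pos (by norm_num)
  set τ := tauCF l with hτdef
  have hτ0 : 0 < τ := by linarith
  refine ⟨τ / (2 * Real.log 2 * (τ + 1)), ((l : ℝ) ^ 2 + 4) * τ / ((τ + 1) * (l : ℝ) ^ 2 * Real.log 2),
    by positivity, by positivity, rfl, rfl, ?_⟩
  intro k hk
  obtain ⟨m, rfl⟩ : ∃ m, k = m + 1 := ⟨k - 1, (Nat.succ_pred_eq_of_pos hk).symm⟩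
  set k := m + 1
  -- measure of the cylinder equals measure of the interval
  obtain ⟨hu0, huv, hv1⟩ := cfUV_mem l hl k
  have hμ : gaussMeasure (cfCylC k l) = gaussMeasure (Set.Ioo (cfUV l k).1 (cfUV l k).2) := by
    rw [cyl_eq l hl k]
    have hset : {x | x ∈ Set.Ioo (cfUV l k).1 (cfUV l k).2 ∧ Irrational x}
        = Set.Ioo (cfUV l k).1 (cfUV l k).2 \ Set.range ((↑) : ℚ → ℝ) := rfl
    rw [hset, measure_diff_null gauss_null_rat]
  obtain ⟨hlow, hup⟩ := gauss_Ioo_bounds (cfUV l k).1 (cfUV l k).2 hu0 (le_of_lt huv) hv1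
  have hdiff : (cfUV l k).2 - (cfUV l k).1 = (cfQ l k * cfR l k)⁻¹ := cfUV_diff l hl k
  have hQpos := cfQ_pos l hl k
  have hRpos := cfR_pos l hl k
  have hQRpos : 0 < cfQ l k * cfR l k := mul_pos hQpos hRpos
  set QR := cfQ l k * cfR l k with hQRdef
  set T := τ ^ (2 * k) with hTdef
  have hTpos : 0 < T := pow_pos hτ0 _
  have hzp : τ ^ (-(2 * (k:ℤ))) = T⁻¹ := by
    have hcast : ((2 * k : ℕ) : ℤ) = 2 * (k:ℤ) := by omega
    rw [hTdef, ← zpow_natCast τ (2*k), hcast, ← zpow_neg]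
  -- key product bounds
  obtain ⟨hQl, hQu⟩ := cfQ_bounds l hl k
  have hRu := cfR_bounds l hl k
  have hRl := cfR_lbounds l hl m
  have hkey_up : τ * QR ≤ (τ + 1) * T := by
    have h1 : cfQ l k * (τ * cfR l k) ≤ τ ^ k * ((τ + 1) * τ ^ k) :=
      mul_le_mul hQu hRu (by positivity) (by positivity)
    have hT : T = τ ^ k * τ ^ k := by rw [hTdef, two_mul, pow_add]
    rw [hT]
    calc τ * QR = cfQ l k * (τ * cfR l k) := by rw [hQRdef]; ring
      _ ≤ τ ^ k * ((τ + 1) * τ ^ k) := h1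
      _ = (τ + 1) * (τ ^ k * τ ^ k) := by ring
  have hkey_lo : (τ + 1) * (l:ℝ) ^ 2 * T ≤ τ ^ 3 * QR := by
    have h1 : ((l:ℝ) * τ ^ k) * ((l:ℝ) * (τ + 1) * τ ^ m) ≤ (τ * cfQ l k) * (τ * cfR l (m+1)) :=
      mul_le_mul hQl hRl (by positivity) (by positivity)
    have hT : τ * (((l:ℝ) * τ ^ k) * ((l:ℝ) * (τ + 1) * τ ^ m)) = (τ + 1) * (l:ℝ) ^ 2 * T := by
      rw [hTdef, show 2 * k = k + (m + 1) by omega, pow_add, pow_succ]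
      ring
    have h2 : τ * (((l:ℝ) * τ ^ k) * ((l:ℝ) * (τ + 1) * τ ^ m))
        ≤ τ * ((τ * cfQ l k) * (τ * cfR l (m+1))) :=
      mul_le_mul_of_nonneg_left h1 (le_of_lt hτ0)
    have h3 : τ * ((τ * cfQ l k) * (τ * cfR l (m+1))) = τ ^ 3 * QR := by
      rw [hQRdef]
      show τ * ((τ * cfQ l k) * (τ * cfR l k)) = τ ^ 3 * (cfQ l k * cfR l k)
      ring
    rw [← hT, ← h3]
    exact h2
  constructor
  · -- lower bound
    rw [hμ]
    refine le_trans ?_ hlow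
    apply ENNReal.ofReal_le_ofReal
    rw [hdiff, hzp]
    have e1 : τ / (2 * Real.log 2 * (τ + 1)) * T⁻¹ = τ / (2 * Real.log 2 * (τ + 1) * T) := by
      field_simp
    have e2 : QR⁻¹ / (2 * Real.log 2) = 1 / (2 * Real.log 2 * QR) := by
      field_simp
    rw [e1, e2, div_le_div_iff₀ (by positivity) (by positivity)]
    linarith [mul_le_mul_of_nonneg_left hkey_up (le_of_lt (show (0:ℝ) < 2 * Real.log 2 by positivity))]
  · -- upper bound
    rw [hμ]
    refine le_trans hup ?_
    apply ENNReal.ofReal_le_ofReal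
    rw [hdiff, hzp]
    have e1 : ((l:ℝ) ^ 2 + 4) * τ / ((τ + 1) * (l:ℝ) ^ 2 * Real.log 2) * T⁻¹
        = ((l:ℝ) ^ 2 + 4) * τ / ((τ + 1) * (l:ℝ) ^ 2 * Real.log 2 * T) := by
      field_simp
    have e2 : QR⁻¹ / Real.log 2 = 1 / (Real.log 2 * QR) := by
      field_simp
    rw [e1, e2, div_le_div_iff₀ (by positivity) (by positivity)]
    -- 1 * ((τ+1) l² log2 T) ≤ (l²+4) τ log2 QR
    have h4 : τ ^ 3 * QR ≤ ((l:ℝ)^2 + 4) * τ * QR := by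
      have h5 : τ^2 * (τ * QR) ≤ ((l:ℝ)^2 + 4) * (τ * QR) :=
        mul_le_mul_of_nonneg_right hsqle (by positivity)
      nlinarith [h5]
    linarith [mul_le_mul_of_nonneg_left (le_trans hkey_lo h4) (le_of_lt hlog)]
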